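/- Let G be a context-free grammar and, for each nonterminal X, let aut(X) be a finite automaton over the alphabet of def(X) (terminals of Σ plus pseudoterminals) with L(def(X)) ⊆ L(aut(X)). Then the combined automaton for G, obtained from aut(S) by recursively replacing every transition labeled by a pseudoterminal X' from a state s to a state s' with ε-transitions from s to the initial state of a fresh copy of aut(X') and ε-transitions from the final states of that copy to s', accepts a superset of L(G); moreover this replacement process terminates, since the dependency graph of the subautomata is acyclic. -/

import Mathlib

/-!
Infrastructure for the strongly-connected-component decomposition of a
context-free grammar (Pereira & Wright): the graph `conn(G)`, the components
`comp(X)`, the defining subgrammars `def(X)` (with out-of-component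
nonterminals treated as pseudoterminals), and language substitution.
-/

namespace LRApprox

open scoped Classical

universe uN uT

/-- Context-free grammar with nonterminals in an arbitrary universe, as in the older Mathlib. -/
structure ContextFreeGrammar.{u, v} (T : Type v) where
  /-- Type of nonterminals. -/
  NT : Type u
  /-- Initial nonterminal. -/
  initial : NT
  /-- Rewrite rules. -/
  rules : Finset (ContextFreeRule T NT)

namespace ContextFreeGrammar

/-- One rewriting step by a rule of `g`. -/
def Produces {T : Type uT} (g : ContextFreeGrammar.{uN} T) (u v : List (Symbol T g.NT)) : Prop :=
  ∃ r ∈ g.rules, r.Rewrites u v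

/-- Rewriting in some number of steps. -/
abbrev Derives {T : Type uT} (g : ContextFreeGrammar.{uN} T) :
    List (Symbol T g.NT) → List (Symbol T g.NT) → Prop :=
  Relation.ReflTransGen g.Produces

/-- `g` derives `s` from its initial nonterminal. -/
def Generates {T : Type uT} (g : ContextFreeGrammar.{uN} T) (s : List (Symbol T g.NT)) : Prop :=
  g.Derives [Symbol.nonterminal g.initial] s

/-- The language generated by `g`. -/
def language {T : Type uT} (g : ContextFreeGrammar.{uN} T) : Language T :=
  { w : List T | g.Generates (List.map Symbol.terminal w) }

end ContextFreeGrammar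

variable {T : Type uT}

/-- A CFG is left-linear if every rule has the form `A → Bβ` or `A → β`
with `β` a string of terminals. -/
def LeftLinear (g : ContextFreeGrammar.{uN} T) : Prop :=
  ∀ r ∈ g.rules, (∃ β : List T, r.output = β.map Symbol.terminal) ∨
    (∃ (B : g.NT) (β : List T), r.output = Symbol.nonterminal B :: β.map Symbol.terminal)

/-- A CFG is right-linear if every rule has the form `A → βB` or `A → β`
with `β` a string of terminals. -/
def RightLinear (g : ContextFreeGrammar.{uN} T) : Prop :=
  ∀ r ∈ g.rules, (∃ β : List T, r.output = β.map Symbol.terminal) ∨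
    (∃ (B : g.NT) (β : List T), r.output = β.map Symbol.terminal ++ [Symbol.nonterminal B])

/-- The edge relation of the graph `conn(G)`: an arc from `X` to `Y` whenever
`Y` occurs in the right-hand side of a rule of `G` whose left-hand side is `X`. -/
def ConnStep (g : ContextFreeGrammar.{uN} T) (X Y : g.NT) : Prop :=
  ∃ r ∈ g.rules, r.input = X ∧ Symbol.nonterminal Y ∈ r.output

/-- `X` and `Y` lie in the same strongly connected component of `conn(G)`. -/
def SameComp (g : ContextFreeGrammar.{uN} T) (X Y : g.NT) : Prop :=
  Relation.ReflTransGen (ConnStep g) X Y ∧ Relation.ReflTransGen (ConnStep g) Y X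

/-- Conversion of a symbol of `G` into a symbol of the defining subgrammar
`def(X)`: nonterminals outside `comp(X)` become pseudoterminals. -/
noncomputable def convSym (g : ContextFreeGrammar.{uN} T) (X : g.NT) :
    Symbol T g.NT → Symbol (T ⊕ g.NT) {Y : g.NT // SameComp g X Y}
  | .terminal t => .terminal (Sum.inl t)
  | .nonterminal Y =>
      if h : SameComp g X Y then .nonterminal ⟨Y, h⟩ else .terminal (Sum.inr Y)

/-- The defining subgrammar `def(X)`: start symbol `X`, nonterminals
`comp(X)`, terminals `Σ` plus the pseudoterminals, and the rules of `G` whose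
left-hand side lies in `comp(X)`. -/
noncomputable def defSub (g : ContextFreeGrammar.{uN} T) (X : g.NT) :
    ContextFreeGrammar.{uN} (T ⊕ g.NT) where
  NT := {Y : g.NT // SameComp g X Y}
  initial := ⟨X, Relation.ReflTransGen.refl, Relation.ReflTransGen.refl⟩
  rules :=
    (g.rules.toList.filterMap fun r =>
      if h : SameComp g X r.input then
        some ⟨⟨r.input, h⟩, r.output.map (convSym g X)⟩
      else none).toFinset

/-- `Y` is a pseudoterminal of `def(X)`: it is not in `comp(X)` but occurs in
the right-hand side of a rule whose left-hand side is in `comp(X)`. -/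
def IsPseudo (g : ContextFreeGrammar.{uN} T) (X Y : g.NT) : Prop :=
  ¬ SameComp g X Y ∧
    ∃ r ∈ g.rules, SameComp g X r.input ∧ Symbol.nonterminal Y ∈ r.output

/-- `L_G(X)`: the terminal strings derivable from the nonterminal `X` in `G`. -/
def langFrom (g : ContextFreeGrammar.{uN} T) (X : g.NT) : Language T :=
  {w : List T | g.Derives [Symbol.nonterminal X] (w.map Symbol.terminal)}

/-- Extension of a substitution `f` from symbols to strings:
`f(c₁…c_n) = f(c₁)⋯f(c_n)`, with `f(ε) = {ε}`. -/
def substStr {α : Type*} {β : Type*} (f : α → Language β) : List α → Language β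
  | [] => 1
  | c :: u => f c * substStr f u

/-- Extension of a substitution to a language: `f(L) = ⋃_{u ∈ L} f(u)`. -/
def substLang {α : Type*} {β : Type*} (f : α → Language β) (L : Language α) :
    Language β :=
  ⋃ u ∈ L, substStr f u

end LRApprox

open LRApprox

namespace LRApprox.ContextFreeGrammar

variable {T : Type uT} {g : LRApprox.ContextFreeGrammar.{uN} T}

lemma Derives.trans_produces {u v w : List (Symbol T g.NT)}
    (huv : g.Derives u v) (hvw : g.Produces v w) :
    g.Derives u w :=
  huv.trans (Relation.ReflTransGen.single hvw)

lemma Produces.trans_derives {u v w : List (Symbol T g.NT)}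
    (huv : g.Produces u v) (hvw : g.Derives v w) :
    g.Derives u w :=
  (Relation.ReflTransGen.single huv).trans hvw

lemma Produces.append_left {v w : List (Symbol T g.NT)}
    (hvw : g.Produces v w) (p : List (Symbol T g.NT)) :
    g.Produces (p ++ v) (p ++ w) :=
  match hvw with | ⟨r, hrmem, hrvw⟩ => ⟨r, hrmem, hrvw.append_left p⟩

lemma Produces.append_right {v w : List (Symbol T g.NT)}
    (hvw : g.Produces v w) (p : List (Symbol T g.NT)) :
    g.Produces (v ++ p) (w ++ p) :=
  match hvw with | ⟨r, hrmem, hrvw⟩ => ⟨r, hrmem, hrvw.append_right p⟩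

lemma Derives.append_left {v w : List (Symbol T g.NT)}
    (hvw : g.Derives v w) (p : List (Symbol T g.NT)) :
    g.Derives (p ++ v) (p ++ w) := by
  induction hvw with
  | refl => rfl
  | tail _ last ih => exact ih.trans_produces <| last.append_left p

lemma Derives.append_right {v w : List (Symbol T g.NT)}
    (hvw : g.Derives v w) (p : List (Symbol T g.NT)) :
    g.Derives (v ++ p) (w ++ p) := by
  induction hvw with
  | refl => rfl
  | tail _ last ih => exact ih.trans_produces <| last.append_right p

end LRApprox.ContextFreeGrammar

namespace LRApprox

section SubstStr

variable {α β γ : Type*}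

lemma substStr_append (f : α → Language β) (u v : List α) :
    substStr f (u ++ v) = substStr f u * substStr f v := by
  induction u with
  | nil => simp [substStr]
  | cons c u ih =>
      show f c * substStr f (u ++ v) = f c * substStr f u * substStr f v
      rw [ih, mul_assoc]

lemma substStr_congr {f f' : α → Language β} : ∀ {u : List α},
    (∀ c ∈ u, f c = f' c) → substStr f u = substStr f' u
  | [], _ => rfl
  | c :: u, h => by
      simp only [substStr, h c (by simp)]
      rw [substStr_congr fun c hc => h c (List.mem_cons_of_mem _ hc)]

lemma substStr_mono {f f' : α → Language β} : ∀ {u : List α},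
    (∀ c ∈ u, f c ≤ f' c) → substStr f u ≤ substStr f' u
  | [], _ => le_rfl
  | c :: u, h => by
      intro x hx
      change x ∈ (f c * substStr f u : Language β) at hx
      change x ∈ (f' c * substStr f' u : Language β)
      rw [Language.mem_mul] at hx ⊢
      obtain ⟨a, ha, b, hb, rfl⟩ := hx
      exact ⟨a, h c (by simp) ha, b, substStr_mono (fun c hc => h c (by simp [hc])) hb, rfl⟩

lemma mem_substStr_cons {f : α → Language β} {c : α} {u : List α} {w₁ w₂ : List β}
    (h1 : w₁ ∈ f c) (h2 : w₂ ∈ substStr f u) : w₁ ++ w₂ ∈ substStr f (c :: u) := by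
  rw [substStr, Language.mem_mul]
  exact ⟨w₁, h1, w₂, h2, rfl⟩

lemma substStr_map (f : α → Language β) (h : γ → α) (u : List γ) :
    substStr f (u.map h) = substStr (fun c => f (h c)) u := by
  induction u with
  | nil => rfl
  | cons c u ih => simp only [List.map_cons, substStr, ih]

lemma mem_substStr_self {f : β → Language β} (hf : ∀ t, [t] ∈ f t) :
    ∀ w : List β, w ∈ substStr f w
  | [] => by simp [substStr, Language.mem_one]
  | t :: w => mem_substStr_cons (hf t) (mem_substStr_self hf w)

end SubstStr

section Paths

variable {α σ τ : Type*}

/-- Path predicate for an NFA. -/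
inductive NPath (M : NFA α σ) : σ → List α → σ → Prop
  | nil (s : σ) : NPath M s [] s
  | cons {s t u : σ} {a : α} {w : List α} (h : t ∈ M.step s a) (hp : NPath M t w u) :
      NPath M s (a :: w) u

lemma NPath.trans {M : NFA α σ} {s t r : σ} {u v : List α}
    (h1 : NPath M s u t) (h2 : NPath M t v r) : NPath M s (u ++ v) r := by
  induction h1 with
  | nil => exact h2
  | cons h _ ih => exact NPath.cons h (ih h2)

lemma nPath_cons_iff {M : NFA α σ} {s q : σ} {a : α} {w : List α} :
    NPath M s (a :: w) q ↔ ∃ t ∈ M.step s a, NPath M t w q := by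
  constructor
  · intro h
    cases h with
    | cons h hp => exact ⟨_, h, hp⟩
  · rintro ⟨t, ht, hp⟩
    exact NPath.cons ht hp

lemma nPath_nil_iff {M : NFA α σ} {s q : σ} : NPath M s [] q ↔ s = q := by
  constructor
  · intro h; cases h; rfl
  · rintro rfl; exact NPath.nil s

lemma mem_evalFrom_iff_nPath {M : NFA α σ} {S : Set σ} {w : List α} {q : σ} :
    q ∈ M.evalFrom S w ↔ ∃ s ∈ S, NPath M s w q := by
  induction w generalizing S with
  | nil =>
      simp only [NFA.evalFrom_nil, nPath_nil_iff]
      constructor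
      · intro h; exact ⟨q, h, rfl⟩
      · rintro ⟨s, hs, rfl⟩; exact hs
  | cons a w ih =>
      show q ∈ M.evalFrom (M.stepSet S a) w ↔ _
      rw [ih]
      constructor
      · rintro ⟨t, ht, hp⟩
        rw [NFA.mem_stepSet] at ht
        obtain ⟨s, hs, hstep⟩ := ht
        exact ⟨s, hs, NPath.cons hstep hp⟩
      · rintro ⟨s, hs, hp⟩
        rw [nPath_cons_iff] at hp
        obtain ⟨t, ht, hp⟩ := hp
        exact ⟨t, NFA.mem_stepSet.2 ⟨s, hs, ht⟩, hp⟩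

lemma nfa_mem_accepts_iff {M : NFA α σ} {w : List α} :
    w ∈ M.accepts ↔ ∃ s ∈ M.start, ∃ t ∈ M.accept, NPath M s w t := by
  rw [NFA.mem_accepts]
  constructor
  · rintro ⟨t, ht, hev⟩
    rw [mem_evalFrom_iff_nPath] at hev
    obtain ⟨s, hs, hp⟩ := hev
    exact ⟨s, hs, t, ht, hp⟩
  · rintro ⟨s, hs, t, ht, hp⟩
    exact ⟨t, ht, mem_evalFrom_iff_nPath.2 ⟨s, hs, hp⟩⟩

/-- Transporting an NFA along an equivalence of state types. -/
def nfaCongr (M : NFA α σ) (e : σ ≃ τ) : NFA α τ where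
  step s a := e '' M.step (e.symm s) a
  start := e '' M.start
  accept := e '' M.accept

lemma nPath_nfaCongr {M : NFA α σ} {e : σ ≃ τ} {s t : σ} {w : List α} (h : NPath M s w t) :
    NPath (nfaCongr M e) (e s) w (e t) := by
  induction h with
  | nil => exact NPath.nil _
  | cons h _ ih =>
      exact NPath.cons (show _ ∈ e '' _ by rw [e.symm_apply_apply]; exact ⟨_, h, rfl⟩) ih

lemma nPath_nfaCongr' {M : NFA α σ} {e : σ ≃ τ} {s t : τ} {w : List α}
    (h : NPath (nfaCongr M e) s w t) : NPath M (e.symm s) w (e.symm t) := by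
  induction h with
  | nil => exact NPath.nil _
  | cons h _ ih =>
      obtain ⟨x, hx, rfl⟩ := h
      exact NPath.cons hx (by simpa using ih)

lemma nfaCongr_accepts (M : NFA α σ) (e : σ ≃ τ) : (nfaCongr M e).accepts = M.accepts := by
  ext w
  rw [nfa_mem_accepts_iff, nfa_mem_accepts_iff]
  constructor
  · rintro ⟨s, ⟨s0, hs0, rfl⟩, t, ⟨t0, ht0, rfl⟩, hp⟩
    have := nPath_nfaCongr' hp
    rw [e.symm_apply_apply, e.symm_apply_apply] at this
    exact ⟨s0, hs0, t0, ht0, this⟩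
  · rintro ⟨s, hs, t, ht, hp⟩
    exact ⟨e s, ⟨s, hs, rfl⟩, e t, ⟨t, ht, rfl⟩, nPath_nfaCongr hp⟩

/-- Every NFA with finitely many states has an equivalent NFA with states in `Type 0`. -/
lemma nfa_shrink {M : NFA α σ} (hσ : Finite σ) :
    ∃ (σ' : Type) (_ : Fintype σ') (M' : NFA α σ'), M'.accepts = M.accepts := by
  have : Fintype σ := Fintype.ofFinite σ
  exact ⟨Fin (Fintype.card σ), inferInstance, nfaCongr M (Fintype.equivFin σ),
    nfaCongr_accepts M _⟩

/-- Path predicate for an εNFA. -/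
inductive EPath (M : εNFA α σ) : σ → List α → σ → Prop
  | nil (s : σ) : EPath M s [] s
  | eps {s t u : σ} {w : List α} (h : t ∈ M.step s none) (hp : EPath M t w u) : EPath M s w u
  | cons {s t u : σ} {a : α} {w : List α} (h : t ∈ M.step s (some a)) (hp : EPath M t w u) :
      EPath M s (a :: w) u

lemma EPath.trans {M : εNFA α σ} {s t r : σ} {u v : List α}
    (h1 : EPath M s u t) (h2 : EPath M t v r) : EPath M s (u ++ v) r := by
  induction h1 with
  | nil => exact h2
  | eps h _ ih => exact EPath.eps h (ih h2)
  | cons h _ ih => exact EPath.cons h (ih h2)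

lemma EPath_nil_closure {M : εNFA α σ} {S : Set σ} {s t : σ} {w : List α}
    (h : EPath M s w t) : w = [] → s ∈ M.εClosure S → t ∈ M.εClosure S := by
  induction h with
  | nil => exact fun _ h => h
  | eps h _ ih => exact fun hw hs => ih hw (εNFA.εClosure.step _ _ h hs)
  | cons h hp ih => intro hw; exact absurd hw (by simp)

lemma mem_εClosure_iff_ePath {M : εNFA α σ} {S : Set σ} {t : σ} :
    t ∈ M.εClosure S ↔ ∃ s ∈ S, EPath M s [] t := by
  constructor
  · intro h
    induction h with
    | base s hs => exact ⟨s, hs, EPath.nil s⟩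
    | step s t ht _ ih =>
        obtain ⟨s0, h0, hp⟩ := ih
        exact ⟨s0, h0, hp.trans (EPath.eps ht (EPath.nil t))⟩
  · rintro ⟨s, hs, hp⟩
    exact EPath_nil_closure hp rfl (εNFA.εClosure.base s hs)

lemma ePath_cons_decomp {M : εNFA α σ} {s q : σ} {v : List α} (h : EPath M s v q) :
    ∀ (a : α) (w : List α), v = a :: w →
      ∃ p r, EPath M s [] p ∧ r ∈ M.step p (some a) ∧ EPath M r w q := by
  induction h with
  | nil => intro a w hw; exact absurd hw (by simp)
  | eps h _ ih =>
      intro a w hw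
      obtain ⟨p, r, h1, h2, h3⟩ := ih a w hw
      exact ⟨p, r, EPath.eps h h1, h2, h3⟩
  | cons h hp _ =>
      intro a w hw
      rw [List.cons.injEq] at hw
      obtain ⟨rfl, rfl⟩ := hw
      exact ⟨_, _, EPath.nil _, h, hp⟩

lemma εNFA_stepSet_eq {M : εNFA α σ} (S : Set σ) (a : α) :
    M.stepSet (M.εClosure S) a =
      M.εClosure {t | ∃ s ∈ S, ∃ p, EPath M s [] p ∧ t ∈ M.step p (some a)} := by
  apply Set.Subset.antisymm
  · intro x hx
    rw [εNFA.mem_stepSet_iff] at hx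
    obtain ⟨p, hp, hx⟩ := hx
    rw [mem_εClosure_iff_ePath] at hp ⊢
    obtain ⟨s, hs, hsp⟩ := hp
    rw [mem_εClosure_iff_ePath] at hx
    obtain ⟨t, ht, htx⟩ := hx
    exact ⟨t, ⟨s, hs, p, hsp, ht⟩, htx⟩
  · intro x hx
    induction hx with
    | base t ht =>
        obtain ⟨s, hs, p, hsp, ht⟩ := ht
        rw [εNFA.mem_stepSet_iff]
        refine ⟨p, ?_, εNFA.εClosure.base _ ht⟩
        rw [mem_εClosure_iff_ePath]
        exact ⟨s, hs, hsp⟩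
    | step x x' hx' _ ih =>
        rw [εNFA.mem_stepSet_iff] at ih ⊢
        obtain ⟨p, hp, hx⟩ := ih
        exact ⟨p, hp, εNFA.εClosure.step _ _ hx' hx⟩

lemma mem_evalFrom_iff_ePath {M : εNFA α σ} {S : Set σ} {w : List α} {q : σ} :
    q ∈ M.evalFrom S w ↔ ∃ s ∈ S, EPath M s w q := by
  induction w generalizing S with
  | nil =>
      show q ∈ M.εClosure S ↔ _
      exact mem_εClosure_iff_ePath
  | cons a w ih =>
      show q ∈ List.foldl M.stepSet (M.stepSet (M.εClosure S) a) w ↔ _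
      rw [εNFA_stepSet_eq S a]
      have : q ∈ M.evalFrom {t | ∃ s ∈ S, ∃ p, EPath M s [] p ∧ t ∈ M.step p (some a)} w ↔ _ :=
        ih
      rw [εNFA.evalFrom] at this
      rw [this]
      constructor
      · rintro ⟨t, ⟨s, hs, p, hsp, ht⟩, htq⟩
        exact ⟨s, hs, hsp.trans (EPath.cons ht htq)⟩
      · rintro ⟨s, hs, hp⟩
        obtain ⟨p, r, h1, h2, h3⟩ := ePath_cons_decomp hp a w rfl
        exact ⟨r, ⟨s, hs, p, h1, h2⟩, h3⟩

lemma εNFA_mem_accepts_iff {M : εNFA α σ} {w : List α} :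
    w ∈ M.accepts ↔ ∃ s ∈ M.start, ∃ t ∈ M.accept, EPath M s w t := by
  show (∃ t ∈ M.accept, t ∈ M.evalFrom M.start w) ↔ _
  constructor
  · rintro ⟨t, ht, hev⟩
    obtain ⟨s, hs, hp⟩ := mem_evalFrom_iff_ePath.1 hev
    exact ⟨s, hs, t, ht, hp⟩
  · rintro ⟨s, hs, t, ht, hp⟩
    exact ⟨t, ht, mem_evalFrom_iff_ePath.2 ⟨s, hs, hp⟩⟩

end Paths

end LRApprox

namespace LRApprox

section Subst

variable {T B Q : Type*}

variable (N : NFA (T ⊕ B) Q) {B₀ : Set B} {σc : B₀ → Type*} (P : ∀ b : B₀, NFA T (σc b))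

/-- The combined εNFA: `N` with every transition labelled by a pseudoterminal `b`
replaced by ε-transitions into and out of a fresh copy of `P b`. -/
def combined : εNFA T (Q ⊕ (Q × Q × Σ b : B₀, σc b)) where
  step x o :=
    match x, o with
    | .inl q, some a => Sum.inl '' N.step q (Sum.inl a)
    | .inl q, none =>
        {x | ∃ (q' : Q) (b : B₀) (s : σc b),
          x = Sum.inr (q, q', ⟨b, s⟩) ∧ q' ∈ N.step q (Sum.inr ↑b) ∧ s ∈ (P b).start}
    | .inr (q, q', ⟨b, s⟩), some a => {x | ∃ s' ∈ (P b).step s a, x = Sum.inr (q, q', ⟨b, s'⟩)}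
    | .inr (q, q', ⟨b, s⟩), none => {x | x = Sum.inl q' ∧ s ∈ (P b).accept}
  start := Sum.inl '' N.start
  accept := Sum.inl '' N.accept

variable {N P}

lemma combined_liftP {b : B₀} {s s' : σc b} {v : List T} (h : NPath (P b) s v s') (q q' : Q) :
    EPath (combined N P) (Sum.inr (q, q', ⟨b, s⟩)) v (Sum.inr (q, q', ⟨b, s'⟩)) := by
  induction h with
  | nil => exact EPath.nil _
  | cons h _ ih => exact EPath.cons ⟨_, h, rfl⟩ ih

variable {f : T ⊕ B → Language T}

lemma combined_liftN (hf : ∀ a, f (Sum.inl a) = {[a]})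
    (hP : ∀ b : B₀, (P b).accepts = f (Sum.inr ↑b)) :
    ∀ {u : List (T ⊕ B)} {q q' : Q}, NPath N q u q' → ∀ {w : List T},
      (∀ b : B, Sum.inr b ∈ u → b ∈ B₀) → w ∈ substStr f u →
      EPath (combined N P) (Sum.inl q) w (Sum.inl q') := by
  intro u q q' h
  induction h with
  | nil =>
      intro w _ hw
      rw [substStr, Language.mem_one] at hw
      subst hw
      exact EPath.nil _
  | @cons q t q' c u h hp ih =>
      intro w hB hw
      rw [substStr, Language.mem_mul] at hw
      obtain ⟨w₁, h1, w₂, h2, rfl⟩ := hw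
      have ih' := ih (fun b hb => hB b (List.mem_cons_of_mem _ hb)) h2
      cases c with
      | inl a =>
          rw [hf a] at h1
          replace h1 : w₁ = [a] := h1
          subst h1
          exact EPath.cons (⟨t, h, rfl⟩ : _ ∈ Sum.inl '' N.step q (Sum.inl a)) ih'
      | inr b =>
          have hb : b ∈ B₀ := hB b (by simp)
          have h1' : w₁ ∈ (P ⟨b, hb⟩).accepts := by rw [hP ⟨b, hb⟩]; exact h1
          obtain ⟨s0, hs0, sf, hsf, hpath⟩ := nfa_mem_accepts_iff.1 h1'
          exact EPath.eps ⟨t, ⟨b, hb⟩, s0, rfl, h, hs0⟩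
            ((combined_liftP hpath q t).trans (EPath.eps ⟨rfl, hsf⟩ ih'))

lemma combined_unlift (hf : ∀ a, f (Sum.inl a) = {[a]})
    (hP : ∀ b : B₀, (P b).accepts = f (Sum.inr ↑b)) {x y : Q ⊕ (Q × Q × Σ b : B₀, σc b)}
    {w : List T} (h : EPath (combined N P) x w y) :
    ∀ t : Q, y = Sum.inl t →
      (∀ q : Q, x = Sum.inl q → ∃ u, NPath N q u t ∧ w ∈ substStr f u) ∧
      (∀ (q q' : Q) (b : B₀) (s : σc b), x = Sum.inr (q, q', ⟨b, s⟩) →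
        ∃ v w', w = v ++ w' ∧ (∃ sf ∈ (P b).accept, NPath (P b) s v sf) ∧
          ∃ u, NPath N q' u t ∧ w' ∈ substStr f u) := by
  induction h with
  | nil s =>
      intro t hty
      constructor
      · rintro q rfl
        rw [Sum.inl.injEq] at hty
        subst hty
        exact ⟨[], NPath.nil _, by rw [substStr, Language.mem_one]⟩
      · rintro q q' b s rfl
        exact absurd hty (by simp)
  | @eps x₀ m y₀ w₀ hstep hp ih =>
      intro t hty
      have IH := ih t hty
      constructor
      · rintro q rfl
        obtain ⟨q', b, s, rfl, hNq, hs0⟩ := hstep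
        obtain ⟨v, w', rfl, ⟨sf, hsf, hPpath⟩, u, hNu, hw'⟩ := IH.2 q q' b s rfl
        refine ⟨Sum.inr ↑b :: u, NPath.cons hNq hNu, mem_substStr_cons ?_ hw'⟩
        rw [← hP b]
        exact nfa_mem_accepts_iff.2 ⟨s, hs0, sf, hsf, hPpath⟩
      · rintro q q' b s rfl
        obtain ⟨rfl, hacc⟩ := hstep
        obtain ⟨u, hNu, hw⟩ := IH.1 q' rfl
        exact ⟨[], w₀, rfl, ⟨s, hacc, NPath.nil s⟩, u, hNu, hw⟩
  | @cons x₀ m y₀ a w₁ hstep hp ih =>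
      intro t hty
      have IH := ih t hty
      constructor
      · rintro q rfl
        obtain ⟨q₂, hq₂, rfl⟩ := hstep
        obtain ⟨u, hNu, hw⟩ := IH.1 q₂ rfl
        refine ⟨Sum.inl a :: u, NPath.cons hq₂ hNu, ?_⟩
        have : [a] ++ w₁ ∈ substStr f (Sum.inl a :: u) :=
          mem_substStr_cons (by rw [hf a]; rfl) hw
        simpa using this
      · rintro q q' b s rfl
        obtain ⟨s', hs', rfl⟩ := hstep
        obtain ⟨v, w', hsplit, ⟨sf, hsf, hPp⟩, u, hNu, hw⟩ := IH.2 q q' b s' rfl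
        exact ⟨a :: v, w', by rw [hsplit, List.cons_append], ⟨sf, hsf, NPath.cons hs' hPp⟩,
          u, hNu, hw⟩

lemma combined_accepts (hf : ∀ a, f (Sum.inl a) = {[a]})
    (hP : ∀ b : B₀, (P b).accepts = f (Sum.inr ↑b))
    (hrel : ∀ u ∈ N.accepts, ∀ b : B, Sum.inr b ∈ u → b ∈ B₀) :
    (combined N P).accepts = substLang f N.accepts := by
  ext w
  rw [εNFA_mem_accepts_iff]
  constructor
  · rintro ⟨x, ⟨s, hs, rfl⟩, y, ⟨t, ht, rfl⟩, hp⟩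
    obtain ⟨u, hNu, hw⟩ := (combined_unlift hf hP hp t rfl).1 s rfl
    have hu : u ∈ N.accepts := nfa_mem_accepts_iff.2 ⟨s, hs, t, ht, hNu⟩
    exact Set.mem_biUnion hu hw
  · intro hw
    obtain ⟨u, hu, hw⟩ := Set.mem_iUnion₂.1 hw
    obtain ⟨s, hs, t, ht, hNp⟩ := nfa_mem_accepts_iff.1 hu
    exact ⟨Sum.inl s, ⟨s, hs, rfl⟩, Sum.inl t, ⟨t, ht, rfl⟩,
      combined_liftN hf hP hNp (hrel u hu) hw⟩

lemma subst_regular [Finite Q] (N : NFA (T ⊕ B) Q) (f : T ⊕ B → Language T)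
    (hf : ∀ a, f (Sum.inl a) = {[a]})
    {B₀ : Set B} (hB₀ : B₀.Finite)
    (hrel : ∀ u ∈ N.accepts, ∀ b : B, Sum.inr b ∈ u → b ∈ B₀)
    {σc : B₀ → Type*} (hσ : ∀ b, Finite (σc b)) (P : ∀ b : B₀, NFA T (σc b))
    (hP : ∀ b : B₀, (P b).accepts = f (Sum.inr ↑b)) :
    ∃ (σ' : Type) (_ : Fintype σ'), ∃ M' : NFA T σ', M'.accepts = substLang f N.accepts := by
  have hB : Finite B₀ := hB₀.to_subtype
  have hfin : Finite (Q ⊕ (Q × Q × Σ b : B₀, σc b)) := by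
    have : ∀ b : B₀, Finite (σc b) := hσ
    infer_instance
  obtain ⟨σ', finσ', M', hM'⟩ := nfa_shrink (M := (combined N P).toNFA) hfin
  refine ⟨σ', finσ', M', ?_⟩
  rw [hM', εNFA.toNFA_correct, combined_accepts hf hP hrel]

end Subst

end LRApprox

namespace LRApprox

section Grammar

open ContextFreeGrammar ContextFreeRule
open scoped Classical

variable {T : Type uT} {g : ContextFreeGrammar.{uN} T}

lemma substStr_singleton {α β : Type*} (f : α → Language β) (c : α) :
    substStr f [c] = f c := by
  show f c * substStr f [] = f c
  rw [show substStr f ([] : List α) = 1 from rfl, mul_one]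

/-- Symbol-level language of `g`. -/
def symF (g : ContextFreeGrammar.{uN} T) : Symbol T g.NT → Language T
  | .terminal t => {[t]}
  | .nonterminal Y => langFrom g Y

/-- `FL g` assigns to each terminal its singleton language and to each
pseudoterminal `Y` the language of `Y` in `g`. -/
def FL (g : ContextFreeGrammar.{uN} T) : T ⊕ g.NT → Language T :=
  Sum.elim (fun t : T => ({[t]} : Language T)) (langFrom g)

/-- Derivations out of a concatenation split. -/
lemma derives_append_split {w : List (Symbol T g.NT)} :
    ∀ {v : List (Symbol T g.NT)}, g.Derives v w → ∀ α β, v = α ++ β →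
      ∃ w₁ w₂, w = w₁ ++ w₂ ∧ g.Derives α w₁ ∧ g.Derives β w₂ := by
  intro v h
  induction h using Relation.ReflTransGen.head_induction_on with
  | refl =>
      rintro α β rfl
      exact ⟨α, β, rfl, Relation.ReflTransGen.refl, Relation.ReflTransGen.refl⟩
  | head hstep htail ih =>
      rintro α β rfl
      obtain ⟨r, hr, hrw⟩ := hstep
      obtain ⟨p, q, hpq, hv⟩ := hrw.exists_parts
      rw [List.append_assoc] at hpq
      rcases List.append_eq_append_iff.1 hpq.symm with ⟨a', ha1, ha2⟩ | ⟨c', hc1, hc2⟩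
      · cases a' with
        | nil =>
            rw [List.append_nil] at ha1
            rw [List.nil_append] at ha2
            obtain ⟨w₁, w₂, hw, hα, hβ'⟩ := ih α (r.output ++ q)
              (by rw [hv, ha1, List.append_assoc])
            refine ⟨w₁, w₂, hw, hα, Produces.trans_derives ⟨r, hr, ?_⟩ hβ'⟩
            rw [← ha2]
            simpa using rewrites_of_exists_parts r [] q
        | cons x a'' =>
            have ha2' : Symbol.nonterminal r.input :: q = x :: (a'' ++ β) := by simpa using ha2
            injection ha2' with hx hq
            obtain ⟨w₁, w₂, hw, hα', hβ⟩ := ih (p ++ r.output ++ a'') β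
              (by rw [hv, hq]; simp [List.append_assoc])
            refine ⟨w₁, w₂, hw, Produces.trans_derives ⟨r, hr, ?_⟩ hα', hβ⟩
            rw [ha1, ← hx]
            simpa using rewrites_of_exists_parts r p a''
      · obtain ⟨w₁, w₂, hw, hα, hβ'⟩ := ih α (c' ++ r.output ++ q)
          (by rw [hv, hc1]; simp [List.append_assoc])
        refine ⟨w₁, w₂, hw, hα, Produces.trans_derives ⟨r, hr, ?_⟩ hβ'⟩
        rw [hc2]
        simpa using rewrites_of_exists_parts r c' q
  done

lemma substStr_symF_derives : ∀ {α : List (Symbol T g.NT)} {w : List T},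
    w ∈ substStr (symF g) α → g.Derives α (w.map Symbol.terminal)
  | [], w, hw => by
      rw [show substStr (symF g) [] = 1 from rfl, Language.mem_one] at hw
      subst hw
      exact Relation.ReflTransGen.refl
  | c :: α, w, hw => by
      rw [show substStr (symF g) (c :: α) = symF g c * substStr (symF g) α from rfl,
        Language.mem_mul] at hw
      obtain ⟨w₁, h1, w₂, h2, rfl⟩ := hw
      have ih := substStr_symF_derives h2
      rw [List.map_append]
      cases c with
      | terminal t =>
          have h1' : w₁ = [t] := h1
          subst h1'
          exact ih.append_left [Symbol.terminal t]
      | nonterminal Y =>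
          have h1' : g.Derives [Symbol.nonterminal Y] (w₁.map Symbol.terminal) := h1
          exact Relation.ReflTransGen.trans (h1'.append_right α)
            (ih.append_left (w₁.map Symbol.terminal))

lemma derives_terminal_mem_substStr {w : List T} :
    ∀ {α : List (Symbol T g.NT)}, g.Derives α (w.map Symbol.terminal) →
      w ∈ substStr (symF g) α := by
  intro α h
  induction h using Relation.ReflTransGen.head_induction_on with
  | refl =>
      rw [substStr_map]
      exact mem_substStr_self (f := fun c => symF g (Symbol.terminal c)) (fun t => rfl) w
  | head hstep htail ih =>
      obtain ⟨r, hr, hrw⟩ := hstep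
      obtain ⟨p, q, hpq, hv⟩ := hrw.exists_parts
      rw [hv, substStr_append, substStr_append, Language.mem_mul] at ih
      obtain ⟨w₁₂, h12, w₃, h3, hw⟩ := ih
      rw [Language.mem_mul] at h12
      obtain ⟨w₁, h1, w₂, h2, hw12⟩ := h12
      have hmid : w₂ ∈ langFrom g r.input :=
        Produces.trans_derives ⟨r, hr, Rewrites.input_output⟩ (substStr_symF_derives h2)
      rw [hpq, substStr_append, substStr_append, substStr_singleton]
      rw [Language.mem_mul, ← hw]
      exact ⟨w₁₂, by rw [Language.mem_mul]; exact ⟨w₁, h1, w₂, hmid, hw12⟩, w₃, h3, rfl⟩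

variable {X : g.NT}

lemma mem_defSub_rules {r' : ContextFreeRule (T ⊕ g.NT) {Y : g.NT // SameComp g X Y}} :
    r' ∈ (defSub g X).rules ↔ ∃ r ∈ g.rules, ∃ h : SameComp g X r.input,
      r' = ⟨⟨r.input, h⟩, r.output.map (convSym g X)⟩ := by
  show r' ∈ (List.filterMap _ g.rules.toList).toFinset ↔ _
  rw [List.mem_toFinset, List.mem_filterMap]
  constructor
  · rintro ⟨r, hr, hsome⟩
    rw [Finset.mem_toList] at hr
    by_cases h : SameComp g X r.input
    · rw [dif_pos h, Option.some.injEq] at hsome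
      exact ⟨r, hr, h, hsome.symm⟩
    · rw [dif_neg h] at hsome
      exact absurd hsome (by simp)
  · rintro ⟨r, hr, h, rfl⟩
    exact ⟨r, Finset.mem_toList.2 hr, by rw [dif_pos h]⟩

/-- Back-projection of symbols of `def(X)` into symbols of `g`. -/
def backSym (g : ContextFreeGrammar.{uN} T) (X : g.NT) :
    Symbol (T ⊕ g.NT) {Y : g.NT // SameComp g X Y} → Symbol T g.NT
  | .terminal (Sum.inl t) => .terminal t
  | .terminal (Sum.inr Y) => .nonterminal Y
  | .nonterminal Y => .nonterminal Y.1

lemma backSym_convSym (c : Symbol T g.NT) : backSym g X (convSym g X c) = c := by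
  cases c with
  | terminal t => rfl
  | nonterminal Y =>
      show backSym g X (if h : SameComp g X Y then _ else _) = _
      split <;> rfl

lemma backSym_map_convSym (α : List (Symbol T g.NT)) :
    (α.map (convSym g X)).map (backSym g X) = α := by
  rw [List.map_map]
  exact List.map_congr_left (fun c _ => backSym_convSym c) |>.trans (List.map_id α)

lemma defSub_produces_back {γ γ' : List (Symbol (T ⊕ g.NT) {Y : g.NT // SameComp g X Y})}
    (h : (defSub g X).Produces γ γ') :
    g.Produces (γ.map (backSym g X)) (γ'.map (backSym g X)) := by
  obtain ⟨r', hr', hrw⟩ := h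
  erw [mem_defSub_rules] at hr'
  obtain ⟨r, hr, hc, rfl⟩ := hr'
  obtain ⟨p, q, hpq, hv⟩ := hrw.exists_parts
  refine ⟨r, hr, ?_⟩
  rw [hpq, hv]
  erw [List.map_append, List.map_append, List.map_append, List.map_append, backSym_map_convSym]
  exact rewrites_of_exists_parts r (p.map (backSym g X)) (q.map (backSym g X))

lemma defSub_derives_back {γ γ' : List (Symbol (T ⊕ g.NT) {Y : g.NT // SameComp g X Y})}
    (h : (defSub g X).Derives γ γ') :
    g.Derives (γ.map (backSym g X)) (γ'.map (backSym g X)) := by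
  induction h with
  | refl => exact Relation.ReflTransGen.refl
  | tail _ hstep ih => exact ih.trans_produces (defSub_produces_back hstep)

lemma defSub_project {γ : List (Symbol (T ⊕ g.NT) {Y : g.NT // SameComp g X Y})}
    {u : List (T ⊕ g.NT)} {w : List T}
    (hd : (defSub g X).Derives γ (u.map Symbol.terminal))
    (hw : w ∈ substStr (FL g) u) :
    g.Derives (γ.map (backSym g X)) (w.map Symbol.terminal) := by
  have h1 := defSub_derives_back hd
  have hmap : (u.map (Symbol.terminal :
      T ⊕ g.NT → Symbol (T ⊕ g.NT) {Y : g.NT // SameComp g X Y})).map (backSym g X) =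
      u.map (Sum.elim Symbol.terminal Symbol.nonterminal) := by
    rw [List.map_map]
    refine List.map_congr_left fun c _ => ?_
    cases c <;> rfl
  erw [hmap] at h1
  refine h1.trans ?_
  apply substStr_symF_derives
  have heq : substStr (fun c : T ⊕ g.NT =>
      symF g (Sum.elim Symbol.terminal Symbol.nonterminal c)) u = substStr (FL g) u :=
    substStr_congr fun c _ => by cases c <;> rfl
  rw [substStr_map, heq]
  exact hw

lemma decompose : ∀ {α : List (Symbol T g.NT)} {w : List T},
    g.Derives α (w.map Symbol.terminal) → ∃ u : List (T ⊕ g.NT),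
      (defSub g X).Derives (α.map (convSym g X)) (u.map Symbol.terminal) ∧
        w ∈ substStr (FL g) u := by
  intro α w h
  induction h using Relation.ReflTransGen.head_induction_on with
  | refl =>
      refine ⟨w.map Sum.inl, ?_, ?_⟩
      · erw [List.map_map, List.map_map]
        exact Relation.ReflTransGen.refl
      · rw [substStr_map]
        exact mem_substStr_self (f := fun t : T => FL g (Sum.inl t)) (fun t => rfl) w
  | head hstep htail ih =>
      obtain ⟨r, hr, hrw⟩ := hstep
      obtain ⟨p, q, hpq, hv⟩ := hrw.exists_parts
      obtain ⟨u', hd', hw'⟩ := ih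
      by_cases h : SameComp g X r.input
      · refine ⟨u', ?_, hw'⟩
        refine Produces.trans_derives ?_ hd'
        refine ⟨⟨⟨r.input, h⟩, r.output.map (convSym g X)⟩, mem_defSub_rules.2 ⟨r, hr, h, rfl⟩, ?_⟩
        rw [hpq, hv]
        erw [List.map_append, List.map_append, List.map_append, List.map_append, List.map_cons, List.map_nil]
        rw [show convSym g X (Symbol.nonterminal r.input) = Symbol.nonterminal ⟨r.input, h⟩
          from dif_pos h]
        have key := rewrites_of_exists_parts
          (⟨⟨r.input, h⟩, r.output.map (convSym g X)⟩ :
            ContextFreeRule (T ⊕ g.NT) {Y : g.NT // SameComp g X Y})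
          (p.map (convSym g X)) (q.map (convSym g X))
        exact key
      · -- `r.input` is a pseudoterminal of `def(X)`
        erw [hv, List.map_append, List.map_append, List.append_assoc] at hd'
        obtain ⟨s₁, s₂₃, hs, hd1, hd23⟩ := derives_append_split hd' _ _ rfl
        obtain ⟨s₂, s₃, hs23, hd2, hd3⟩ := derives_append_split hd23 _ _ rfl
        rw [hs23] at hs
        obtain ⟨u₁, u₂₃, hu', hmap1, hmap23⟩ := List.map_eq_append_iff.1 hs
        obtain ⟨u₂, u₃, hu23, hmap2, hmap3⟩ := List.map_eq_append_iff.1 hmap23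
        subst hu23
        subst hu'
        rw [substStr_append, substStr_append, Language.mem_mul] at hw'
        obtain ⟨w₁, hw1, w₂₃, hw23, hww⟩ := hw'
        rw [Language.mem_mul] at hw23
        obtain ⟨w₂, hw2, w₃, hw3, hww23⟩ := hw23
        rw [← hmap2] at hd2
        have hmid : w₂ ∈ langFrom g r.input := by
          have hproj := defSub_project hd2 hw2
          erw [backSym_map_convSym] at hproj
          exact Produces.trans_derives ⟨r, hr, Rewrites.input_output⟩ hproj
        refine ⟨u₁ ++ Sum.inr r.input :: u₃, ?_, ?_⟩
        · rw [hpq]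
          erw [List.map_append, List.map_append, List.map_cons, List.map_nil]
          erw [show convSym g X (Symbol.nonterminal r.input) = Symbol.terminal (Sum.inr r.input)
            from dif_neg h]
          rw [← hmap1] at hd1
          rw [← hmap3] at hd3
          have step1 := hd1.append_right
            ([Symbol.terminal (Sum.inr r.input)] ++ q.map (convSym g X))
          have step2 := hd3.append_left
            ((u₁.map Symbol.terminal) ++ [Symbol.terminal (Sum.inr r.input)])
          rw [List.append_assoc] at step2
          have := Relation.ReflTransGen.trans step1 step2
          erw [← List.append_assoc (List.map (convSym g X) p),
            List.append_assoc (u₁.map Symbol.terminal)] at this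
          erw [List.map_append, List.map_cons]
          exact this
        · rw [substStr_append, Language.mem_mul]
          exact ⟨w₁, hw1, w₂ ++ w₃, mem_substStr_cons hmid hw3, by rw [hww23]; exact hww⟩

end Grammar

end LRApprox

namespace LRApprox

section WF

variable {T : Type uT} {g : ContextFreeGrammar.{uN} T}

/-- Nonterminals occurring in right-hand sides of rules of `g`. -/
def rhsNT (g : ContextFreeGrammar.{uN} T) : Set g.NT :=
  {Y | ∃ r ∈ g.rules, Symbol.nonterminal Y ∈ r.output}

lemma rhsNT_finite (g : ContextFreeGrammar.{uN} T) : (rhsNT g).Finite := by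
  have heq : rhsNT g = ⋃ r ∈ (g.rules : Set (ContextFreeRule T g.NT)),
      {Y | Symbol.nonterminal Y ∈ r.output} := by
    ext Y
    simp [rhsNT]
  rw [heq]
  refine Set.Finite.biUnion g.rules.finite_toSet fun r _ => ?_
  refine Set.Finite.subset (List.finite_toSet (r.output.filterMap fun s =>
    match s with | Symbol.nonterminal Y => some Y | _ => none)) ?_
  intro Y hY
  rw [Set.mem_setOf_eq] at hY
  show Y ∈ List.filterMap _ _
  rw [List.mem_filterMap]
  exact ⟨_, hY, rfl⟩

/-- The set of components strictly below `X` in the dependency order. -/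
def strictBelow (g : ContextFreeGrammar.{uN} T) (X : g.NT) : Set g.NT :=
  {Z ∈ rhsNT g | Relation.ReflTransGen (ConnStep g) X Z ∧
    ¬ Relation.ReflTransGen (ConnStep g) Z X}

lemma strictBelow_finite (X : g.NT) : (strictBelow g X).Finite :=
  (rhsNT_finite g).subset fun _ h => h.1

lemma pseudo_lt {X Y : g.NT} (h : IsPseudo g X Y) :
    (strictBelow g Y).ncard < (strictBelow g X).ncard := by
  obtain ⟨hnc, r, hr, hcomp, hmem⟩ := h
  have hXY : Relation.ReflTransGen (ConnStep g) X Y :=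
    hcomp.1.trans (Relation.ReflTransGen.single ⟨r, hr, rfl, hmem⟩)
  have hYX : ¬ Relation.ReflTransGen (ConnStep g) Y X := fun hyx => hnc ⟨hXY, hyx⟩
  refine Set.ncard_lt_ncard ?_ (strictBelow_finite X)
  constructor
  · rintro Z ⟨hZfin, hYZ, hnZY⟩
    exact ⟨hZfin, hXY.trans hYZ, fun hZX => hnZY (hZX.trans hXY)⟩
  · intro hsub
    have hY : Y ∈ strictBelow g X := ⟨⟨r, hr, hmem⟩, hXY, hYX⟩
    have := hsub hY
    exact this.2.2 Relation.ReflTransGen.refl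

lemma pseudo_wf (g : ContextFreeGrammar.{uN} T) :
    WellFounded (fun Y X : g.NT => IsPseudo g X Y) :=
  Subrelation.wf (fun h => pseudo_lt h)
    (InvImage.wf (fun X => (strictBelow g X).ncard) Nat.lt_wfRel.wf)

lemma substLang_congr {α β : Type*} {f f' : α → Language β} {L : Language α}
    (h : ∀ u ∈ L, ∀ c ∈ u, f c = f' c) : substLang f L = substLang f' L := by
  unfold substLang
  ext w
  erw [Set.mem_iUnion₂, Set.mem_iUnion₂]
  constructor
  · rintro ⟨u, hu, hw⟩
    exact ⟨u, hu, by rwa [← substStr_congr (h u hu)]⟩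
  · rintro ⟨u, hu, hw⟩
    exact ⟨u, hu, by rwa [substStr_congr (h u hu)]⟩

end WF

end LRApprox





/-- Given, for each nonterminal `X`, a finite automaton
`aut(X)` over the alphabet of `def(X)` (terminals plus pseudoterminals) with
`L(def(X)) ⊆ L(aut(X))`, the combined automaton for `G` — obtained from
`aut(S)` by recursively replacing every transition labeled by a pseudoterminal
`X'` with ε-transitions into and out of a fresh copy of `aut(X')` — accepts a
superset of `L(G)`; moreover the replacement process terminates (the
subautomata dependency graph being acyclic), yielding languages `Exp X`
satisfying the corresponding substitution equations, with the combined
automaton a finite automaton for `Exp S`. -/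
theorem combined_automaton_sound {T : Type*} (g : LRApprox.ContextFreeGrammar T)
    (Q : g.NT → Type) (hQ : ∀ X : g.NT, Finite (Q X))
    (M : ∀ X : g.NT, NFA (T ⊕ g.NT) (Q X))
    (hsound : ∀ X : g.NT, (defSub g X).language ≤ (M X).accepts)
    (halpha : ∀ (X : g.NT) (u : List (T ⊕ g.NT)), u ∈ (M X).accepts →
      ∀ Y : g.NT, Sum.inr Y ∈ u → IsPseudo g X Y) :
    ∃ Exp : g.NT → Language T,
      (∀ X : g.NT, Exp X =
        substLang (Sum.elim (fun a : T => ({[a]} : Language T)) Exp)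
          ((M X).accepts)) ∧
      g.language ≤ Exp g.initial ∧
      ∃ (σ : Type) (_ : Fintype σ) (MC : NFA T σ), MC.accepts = Exp g.initial := by
  classical
  have wf : WellFounded (fun Y X : g.NT => IsPseudo g X Y) := pseudo_wf g
  set F : ∀ X : g.NT, (∀ Y : g.NT, IsPseudo g X Y → Language T) → Language T :=
    fun X rec => substLang (Sum.elim (fun a : T => ({[a]} : Language T))
      (fun Y : g.NT => if h : IsPseudo g X Y then rec Y h else (0 : Language T))) ((M X).accepts) with hF
  set Exp : g.NT → Language T := fun X => wf.fix F X with hExpDef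
  have heq : ∀ X : g.NT, Exp X =
      substLang (Sum.elim (fun a : T => ({[a]} : Language T)) Exp) ((M X).accepts) := by
    intro X
    have hfix : Exp X = F X (fun Y _ => Exp Y) := WellFounded.fix_eq wf F X
    rw [hfix]
    show substLang _ _ = substLang _ _
    refine substLang_congr fun u hu c hc => ?_
    cases c with
    | inl a => rfl
    | inr Y =>
        have hps : IsPseudo g X Y := halpha X u hu Y hc
        show (if h : IsPseudo g X Y then Exp Y else (0 : Language T)) = Exp Y
        rw [dif_pos hps]
  have hlang : ∀ X : g.NT, langFrom g X ≤ Exp X := by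
    refine wf.fix fun X IH => ?_
    intro w hw
    obtain ⟨u, hd, hwu⟩ := decompose (X := X) hw
    have hconv : (List.map (convSym g X) [Symbol.nonterminal X]) =
        [Symbol.nonterminal (defSub g X).initial] := by
      rw [List.map_cons, List.map_nil]
      congr 1
      exact dif_pos ⟨Relation.ReflTransGen.refl, Relation.ReflTransGen.refl⟩
    erw [hconv] at hd
    have hu : u ∈ (M X).accepts := hsound X hd
    have hmem : w ∈ substStr (Sum.elim (fun a : T => ({[a]} : Language T)) Exp) u := by
      refine substStr_mono (fun c hc => ?_) hwu
      cases c with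
      | inl a => exact le_rfl
      | inr Y => exact IH Y (halpha X u hu Y hc)
    rw [heq X]
    exact Set.mem_biUnion hu hmem
  refine ⟨Exp, heq, ?_, ?_⟩
  · intro w hw
    exact hlang g.initial hw
  · refine wf.fix (C := fun X => ∃ (σ : Type) (_ : Fintype σ) (MC : NFA T σ),
      MC.accepts = Exp X) (fun X IH => ?_) g.initial
    have hQX : Finite (Q X) := hQ X
    set B₀ : Set g.NT := {Y : g.NT | IsPseudo g X Y} with hB₀
    have hB₀fin : B₀.Finite :=
      (rhsNT_finite g).subset fun Y hY => by
        obtain ⟨-, r, hr, -, hmem⟩ := hY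
        exact ⟨r, hr, hmem⟩
    have hrel : ∀ u ∈ (M X).accepts, ∀ b : g.NT, Sum.inr b ∈ u → b ∈ B₀ :=
      fun u hu b hb => halpha X u hu b hb
    choose σc fins Ps hPs using fun b : ↥B₀ => IH ↑b b.2
    have hσfin : ∀ b : ↥B₀, Finite (σc b) := fun b => @Finite.of_fintype _ (fins b)
    obtain ⟨σ', fin', M', hM'⟩ := subst_regular (M X)
      (Sum.elim (fun a : T => ({[a]} : Language T)) Exp) (fun a => rfl) hB₀fin hrel
      hσfin Ps (fun b => hPs b)
    exact ⟨σ', fin', M', by rw [hM', ← heq X]⟩
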